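/- Define f(η) = A_0(η)/(A_2(η) − A_4(η)). Then for every η ∈ ℝ, η/f(η) = (A_0(η) − 3 A_2(η))/(2 A_0(η)) ∈ (−1, 1/2); consequently f(η) > 2η and f(η) > −η for all η, and f(η) → +∞ as η → +∞ and as η → −∞. -/

import Mathlib

open Real MeasureTheory Set Filter

/-- `A k η = ∫_0^1 z^k e^{-η z²} dz`. -/
noncomputable def A (k : ℕ) (η : ℝ) : ℝ :=
  ∫ z in (0:ℝ)..1, z ^ k * Real.exp (-η * z ^ 2)

/-- `B(η, α) = 3 e^{-η} / A₀(η) − (3 − 2η + 4η²/α)`. -/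
noncomputable def B (η α : ℝ) : ℝ :=
  3 * Real.exp (-η) / A 0 η - (3 - 2 * η + 4 * η ^ 2 / α)

lemma contA (k : ℕ) (η : ℝ) : Continuous (fun z : ℝ => z ^ k * Real.exp (-η * z ^ 2)) := by
  continuity

lemma intA (k : ℕ) (η : ℝ) :
    IntervalIntegrable (fun z : ℝ => z ^ k * Real.exp (-η * z ^ 2)) volume 0 1 :=
  (contA k η).intervalIntegrable _ _

lemma A_sub_pos (η : ℝ) (j k : ℕ) (hjk : j < k) : 0 < A j η - A k η := by
  have h : A j η - A k η
      = ∫ z in (0:ℝ)..1, (z ^ j * Real.exp (-η * z ^ 2) - z ^ k * Real.exp (-η * z ^ 2)) := by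
    rw [A, A, intervalIntegral.integral_sub (intA j η) (intA k η)]
  rw [h]
  apply intervalIntegral.intervalIntegral_pos_of_pos_on
    (((contA j η).sub (contA k η)).intervalIntegrable _ _)
  · intro x hx
    have h1 : x ^ k < x ^ j := pow_lt_pow_right_of_lt_one₀ hx.1 hx.2 hjk
    have h2 : 0 < Real.exp (-η * x ^ 2) := Real.exp_pos _
    simp only [Pi.sub_apply]
    nlinarith
  · norm_num

lemma A_pos (η : ℝ) (k : ℕ) : 0 < A k η := by
  apply intervalIntegral.intervalIntegral_pos_of_pos_on (intA k η)
  · intro x hx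
    have hx0 : 0 < x := hx.1
    have := Real.exp_pos (-η * x ^ 2)
    positivity
  · norm_num

lemma deriv_aux (η z : ℝ) (k : ℕ) :
    HasDerivAt (fun z : ℝ => z ^ (k+1) * Real.exp (-η * z ^ 2))
      (((k:ℝ)+1) * z ^ k * Real.exp (-η * z ^ 2)
        + z ^ (k+1) * (Real.exp (-η * z ^ 2) * (-η * (2 * z)))) z := by
  have hg : HasDerivAt (fun x : ℝ => -η * x ^ 2) (-η * (2 * z)) z := by
    simpa using (hasDerivAt_pow 2 z).const_mul (-η)
  have he := hg.exp
  have hp : HasDerivAt (fun x : ℝ => x ^ (k+1)) (((k:ℝ)+1) * z ^ k) z := by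
    simpa using hasDerivAt_pow (k+1) z
  exact hp.mul he

lemma ftc1 (η : ℝ) :
    ∫ z in (0:ℝ)..1, (1 - 2 * η * z ^ 2) * Real.exp (-η * z ^ 2) = Real.exp (-η) := by
  have h := intervalIntegral.integral_eq_sub_of_hasDerivAt
    (f := fun z : ℝ => z ^ 1 * Real.exp (-η * z ^ 2))
    (f' := fun z : ℝ => (1 - 2 * η * z ^ 2) * Real.exp (-η * z ^ 2))
    (a := (0:ℝ)) (b := 1)
    (fun z _ => by
      have := deriv_aux η z 0
      refine this.congr_deriv ?_
      push_cast
      ring)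
    (by
      apply Continuous.intervalIntegrable
      continuity)
  simpa using h

lemma ftc3 (η : ℝ) :
    ∫ z in (0:ℝ)..1, (3 * z ^ 2 - 2 * η * z ^ 4) * Real.exp (-η * z ^ 2) = Real.exp (-η) := by
  have h := intervalIntegral.integral_eq_sub_of_hasDerivAt
    (f := fun z : ℝ => z ^ 3 * Real.exp (-η * z ^ 2))
    (f' := fun z : ℝ => (3 * z ^ 2 - 2 * η * z ^ 4) * Real.exp (-η * z ^ 2))
    (a := (0:ℝ)) (b := 1)
    (fun z _ => by
      have := deriv_aux η z 2
      refine this.congr_deriv ?_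
      push_cast
      ring)
    (by
      apply Continuous.intervalIntegrable
      continuity)
  simpa using h

lemma key (η : ℝ) : A 0 η - 3 * A 2 η = 2 * η * (A 2 η - A 4 η) := by
  have h1 : A 0 η - 2 * η * A 2 η = Real.exp (-η) := by
    rw [← ftc1 η, A, A, ← intervalIntegral.integral_const_mul,
      ← intervalIntegral.integral_sub (intA 0 η) ((intA 2 η).const_mul _)]
    apply intervalIntegral.integral_congr
    intro z _
    simp only []
    ring
  have h2 : 3 * A 2 η - 2 * η * A 4 η = Real.exp (-η) := by
    rw [← ftc3 η, A, A, ← intervalIntegral.integral_const_mul,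
      ← intervalIntegral.integral_const_mul,
      ← intervalIntegral.integral_sub ((intA 2 η).const_mul _) ((intA 4 η).const_mul _)]
    apply intervalIntegral.integral_congr
    intro z _
    simp only []
    ring
  linarith

/-- With `f(η) = A₀(η)/(A₂(η) − A₄(η))`, for all `η`:
`η/f(η) = (A₀(η) − 3A₂(η))/(2A₀(η)) ∈ (−1, 1/2)`, hence `f(η) > 2η` and
`f(η) > −η`; and `f(η) → +∞` as `η → ±∞`. -/
theorem stmt_18 :
    (∀ η : ℝ,
      η / (A 0 η / (A 2 η - A 4 η)) = (A 0 η - 3 * A 2 η) / (2 * A 0 η) ∧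
      -1 < (A 0 η - 3 * A 2 η) / (2 * A 0 η) ∧
      (A 0 η - 3 * A 2 η) / (2 * A 0 η) < 1 / 2 ∧
      A 0 η / (A 2 η - A 4 η) > 2 * η ∧
      A 0 η / (A 2 η - A 4 η) > -η) ∧
    Tendsto (fun η : ℝ => A 0 η / (A 2 η - A 4 η)) atTop atTop ∧
    Tendsto (fun η : ℝ => A 0 η / (A 2 η - A 4 η)) atBot atTop := by
  have main : ∀ η : ℝ,
      η / (A 0 η / (A 2 η - A 4 η)) = (A 0 η - 3 * A 2 η) / (2 * A 0 η) ∧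
      -1 < (A 0 η - 3 * A 2 η) / (2 * A 0 η) ∧
      (A 0 η - 3 * A 2 η) / (2 * A 0 η) < 1 / 2 ∧
      A 0 η / (A 2 η - A 4 η) > 2 * η ∧
      A 0 η / (A 2 η - A 4 η) > -η := by
    intro η
    have hA0 := A_pos η 0
    have hA2 := A_pos η 2
    have hD := A_sub_pos η 2 4 (by norm_num)
    have h02 := A_sub_pos η 0 2 (by norm_num)
    have hk := key η
    refine ⟨?_, ?_, ?_, ?_, ?_⟩
    · rw [div_div_eq_mul_div, div_eq_div_iff hA0.ne' (by positivity)]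
      nlinarith
    · rw [lt_div_iff₀ (by positivity)]
      linarith
    · rw [div_lt_div_iff₀ (by positivity) (by norm_num)]
      linarith
    · rw [gt_iff_lt, lt_div_iff₀ hD]
      nlinarith
    · rw [gt_iff_lt, lt_div_iff₀ hD]
      nlinarith
  refine ⟨main, ?_, ?_⟩
  · exact tendsto_atTop_mono (fun η => (main η).2.2.2.1.le)
      (tendsto_id.const_mul_atTop two_pos)
  · exact tendsto_atTop_mono (fun η => (main η).2.2.2.2.le)
      tendsto_neg_atBot_atTop
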